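/- Let V be a finite-dimensional real vector space, g a symmetric bilinear form on V non-degenerate on a hyperplane H = ker ω (ω a nonzero functional). Then there exists a linear functional f on V with ker f = H such that g + ω·f (symmetrized product) is non-degenerate on all of V; if moreover g restricted to H is positive definite, f can be chosen so that g + ω·f is positive definite. -/

import Mathlib

private lemma exists_Y {V : Type*} [AddCommGroup V] [Module ℝ V] [FiniteDimensional ℝ V]
    (g : V →ₗ[ℝ] V →ₗ[ℝ] ℝ) (hg : ∀ v w, g v w = g w v)
    (ω : V →ₗ[ℝ] ℝ) (hω : ω ≠ 0)
    (hnd : ∀ v, ω v = 0 → (∀ w, ω w = 0 → g v w = 0) → v = 0) :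
    ∃ Y : V, ω Y = 1 ∧ ∀ w, ω w = 0 → g Y w = 0 := by
  obtain ⟨x, hx⟩ := DFunLike.ne_iff.mp hω
  set X := (ω x)⁻¹ • x with hX
  have hωX : ω X = 1 := by simp [hX, inv_mul_cancel₀ hx]
  set H := LinearMap.ker ω with hH
  set B : H →ₗ[ℝ] H →ₗ[ℝ] ℝ := ((g.domRestrict H).compl₂ H.subtype) with hBdef
  have hB : LinearMap.BilinForm.Nondegenerate B := by
    refine ⟨?_, ?_⟩
    · intro v hv
      exact Subtype.ext (hnd v.1 v.2 (fun w hw => hv ⟨w, hw⟩))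
    · intro v hv
      exact Subtype.ext (hnd v.1 v.2 (fun w hw => (hg _ _).trans (hv ⟨w, hw⟩)))
  set φ : H →ₗ[ℝ] ℝ := (g X).domRestrict H with hφ
  set p : H := (LinearMap.BilinForm.toDual B hB).symm φ with hpdef
  have hp : ∀ w : H, B p w = φ w := fun w =>
    LinearMap.BilinForm.apply_toDual_symm_apply (f := φ) (v := w)
  refine ⟨X - p, by simp [hωX, (p.2 : ω p.1 = 0)], ?_⟩
  intro w hw
  have := hp ⟨w, hw⟩
  simp only [hBdef, hφ, LinearMap.compl₂_apply, LinearMap.domRestrict_apply,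
    Submodule.coe_subtype] at this
  simp [this]


/-- A degenerate symmetric form `g` which is non-degenerate on the hyperplane
`H = ker ω` can be made non-degenerate (resp. positive definite, if `g|_H` is)
on all of `V` by adding the symmetrized product `ω·f` for a suitable functional
`f` with `ker f = H`. -/
theorem stmt12 {V : Type*} [AddCommGroup V] [Module ℝ V] [FiniteDimensional ℝ V]
    (g : V →ₗ[ℝ] V →ₗ[ℝ] ℝ) (hg : ∀ v w, g v w = g w v)
    (ω : V →ₗ[ℝ] ℝ) (hω : ω ≠ 0)
    (hnd : ∀ v, ω v = 0 → (∀ w, ω w = 0 → g v w = 0) → v = 0) :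
    (∃ f : V →ₗ[ℝ] ℝ, (∀ v, f v = 0 ↔ ω v = 0) ∧
      ∀ v : V, (∀ w, g v w + (ω v * f w + ω w * f v) / 2 = 0) → v = 0) ∧
    ((∀ v, ω v = 0 → v ≠ 0 → 0 < g v v) →
      ∃ f : V →ₗ[ℝ] ℝ, (∀ v, f v = 0 ↔ ω v = 0) ∧
        ∀ v : V, v ≠ 0 → 0 < g v v + ω v * f v) := by
  obtain ⟨Y, hωY, hgY⟩ := exists_Y g hg ω hω hnd
  set c : ℝ := 1 + |g Y Y| with hc
  have hc0 : 0 < c := by positivity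
  have hcY : 1 ≤ c + g Y Y := by
    have := abs_le.mp (le_refl |g Y Y|) |>.1
    simp only [hc]; linarith
  set f : V →ₗ[ℝ] ℝ := c • ω with hf
  have hfv : ∀ v, f v = c * ω v := fun v => rfl
  have hker : ∀ v, f v = 0 ↔ ω v = 0 := by
    intro v; rw [hfv]
    constructor
    · intro h; rcases mul_eq_zero.mp h with h | h
      · exact absurd h hc0.ne'
      · exact h
    · intro h; simp [h]
  -- decomposition facts
  have hdecomp : ∀ v : V, g v Y = ω v * g Y Y ∧ g v v = (ω v)^2 * g Y Y + g (v - ω v • Y) (v - ω v • Y) := by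
    intro v
    set t := ω v with ht
    set h := v - t • Y with hh
    have hωh : ω h = 0 := by simp [hh, hωY, ht]
    have hgYh : g Y h = 0 := hgY h hωh
    have hghY : g h Y = 0 := (hg h Y).trans hgYh
    have hv : v = t • Y + h := by simp [hh]
    constructor
    · rw [hv]; simp [hghY]; try ring
    · rw [hv]; simp [hgYh, hghY, hωh]; try ring
  refine ⟨⟨f, hker, ?_⟩, fun hpos => ⟨f, hker, ?_⟩⟩
  · intro v hv
    have hvH : ∀ w, ω w = 0 → g v w = 0 := by
      intro w hw
      have := hv w
      rw [hfv, hfv, hw] at this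
      linarith
    have h1 := hv Y
    rw [hfv, hfv, hωY] at h1
    have h2 := (hdecomp v).1
    -- g v Y + (ω v * (c*1) + 1 * (c * ω v))/2 = 0  →  ω v * g Y Y + c * ω v = 0
    have h3 : ω v * (g Y Y + c) = 0 := by rw [h2] at h1; ring_nf at h1 ⊢; linarith
    have ht : ω v = 0 := by
      rcases mul_eq_zero.mp h3 with h | h
      · exact h
      · exfalso; linarith
    exact hnd v ht hvH
  · intro v hv
    have h2 := (hdecomp v).2
    rw [hfv, h2]
    set t := ω v with ht
    set h := v - t • Y with hh
    have hωh : ω h = 0 := by simp [hh, hωY, ht]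
    by_cases h0 : t = 0
    · have hne : h ≠ 0 := by
        intro hz; apply hv
        have : v = t • Y + h := by simp [hh]
        rw [this, h0, hz]; simp
      have := hpos h hωh hne
      rw [h0]; simpa using this
    · have hgh : 0 ≤ g h h := by
        by_cases hz : h = 0
        · simp [hz]
        · exact (hpos h hωh hz).le
      have : 0 < t^2 * (g Y Y + c) := by
        apply mul_pos (by positivity) (by linarith)
      nlinarith
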